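/- Let Ω ⊆ ℝⁿ be an open bounded set and let u : closure(Ω) → ℝ be a continuous function with u = 0 on ∂Ω and max_{closure(Ω)} u > 0. Fix ε > 0 and set ρ(ε) := 2√(ε·sup_Ω |u|). Then sup_{x ∈ Ω} u^ε(x) = max_{closure(Ω)} u, and for every x ∈ Ω with dist(x, ∂Ω) > ρ(ε) one has u^ε(x) = max_{closure(Ω)} u if and only if u(x) = max_{closure(Ω)} u. -/

import Mathlib

open Set Metric

/-- The sup-convolution `u^ε` of a function `u : Ω → ℝ`. -/
noncomputable def supConv {n : ℕ} (ε : ℝ) (Ω : Set (EuclideanSpace ℝ (Fin n)))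
    (u : EuclideanSpace ℝ (Fin n) → ℝ) (x : EuclideanSpace ℝ (Fin n)) : ℝ :=
  sSup ((fun y => u y - ‖x - y‖ ^ 2 / (2 * ε)) '' Ω)

/-- The radius `ρ(ε) = 2 √(ε ⬝ sup_Ω |u|)`. -/
noncomputable def rho {n : ℕ} (ε : ℝ) (Ω : Set (EuclideanSpace ℝ (Fin n)))
    (u : EuclideanSpace ℝ (Fin n) → ℝ) : ℝ :=
  2 * Real.sqrt (ε * sSup ((fun y => |u y|) '' Ω))

theorem supConv_max
    {n : ℕ} (Ω : Set (EuclideanSpace ℝ (Fin n)))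
    (hΩopen : IsOpen Ω) (hΩbdd : Bornology.IsBounded Ω)
    (u : EuclideanSpace ℝ (Fin n) → ℝ)
    (hu : ContinuousOn u (closure Ω))
    (hu0 : ∀ x ∈ frontier Ω, u x = 0)
    (hmaxpos : 0 < sSup (u '' closure Ω))
    (ε : ℝ) (hε : 0 < ε) :
    sSup (supConv ε Ω u '' Ω) = sSup (u '' closure Ω) ∧
    ∀ x ∈ Ω, rho ε Ω u < Metric.infDist x (frontier Ω) →
      (supConv ε Ω u x = sSup (u '' closure Ω) ↔ u x = sSup (u '' closure Ω)) := by
  classical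
  set M := sSup (u '' closure Ω) with hM
  have hΩne : Ω.Nonempty := by
    rcases Ω.eq_empty_or_nonempty with h | h
    · exfalso
      rw [hM, h] at hmaxpos
      simp at hmaxpos
    · exact h
  have hK : IsCompact (closure Ω) := hΩbdd.isCompact_closure
  have hKne : (closure Ω).Nonempty := hΩne.closure
  obtain ⟨x₀, hx₀K, hx₀max⟩ := hK.exists_isMaxOn hKne hu
  have hbddu : BddAbove (u '' closure Ω) := by
    refine ⟨u x₀, ?_⟩
    rintro _ ⟨y, hy, rfl⟩
    exact hx₀max hy
  have hMeq : M = u x₀ := by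
    apply le_antisymm
    · exact csSup_le (hKne.image u) (by rintro _ ⟨y, hy, rfl⟩; exact hx₀max hy)
    · exact le_csSup hbddu ⟨x₀, hx₀K, rfl⟩
  have hbd : ∀ y ∈ closure Ω, u y ≤ M := fun y hy => hMeq ▸ hx₀max hy
  have hx₀Ω : x₀ ∈ Ω := by
    by_contra h
    have hfr : x₀ ∈ frontier Ω := by
      rw [frontier, hΩopen.interior_eq]
      exact ⟨hx₀K, h⟩
    have h0 := hu0 x₀ hfr
    rw [hMeq, h0] at hmaxpos
    exact lt_irrefl 0 hmaxpos
  have h2ε : (0:ℝ) < 2 * ε := by linarith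
  have hqnn : ∀ x y : EuclideanSpace ℝ (Fin n), (0:ℝ) ≤ ‖x - y‖ ^ 2 / (2 * ε) :=
    fun x y => div_nonneg (sq_nonneg _) h2ε.le
  have hle : ∀ x : EuclideanSpace ℝ (Fin n), ∀ y ∈ Ω,
      u y - ‖x - y‖ ^ 2 / (2 * ε) ≤ M := fun x y hy =>
    le_trans (sub_le_self _ (hqnn x y)) (hbd y (subset_closure hy))
  have hbdd : ∀ x : EuclideanSpace ℝ (Fin n),
      BddAbove ((fun y => u y - ‖x - y‖ ^ 2 / (2 * ε)) '' Ω) := by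
    intro x
    refine ⟨M, ?_⟩
    rintro _ ⟨y, hy, rfl⟩
    exact hle x y hy
  have hscle : ∀ x : EuclideanSpace ℝ (Fin n), supConv ε Ω u x ≤ M := by
    intro x
    exact csSup_le (hΩne.image _) (by rintro _ ⟨y, hy, rfl⟩; exact hle x y hy)
  have hsge : ∀ x ∈ Ω, u x ≤ supConv ε Ω u x := by
    intro x hx
    calc u x = u x - ‖x - x‖ ^ 2 / (2 * ε) := by simp
      _ ≤ supConv ε Ω u x := le_csSup (hbdd x) ⟨x, hx, rfl⟩
  have hkey : ∀ x ∈ Ω, supConv ε Ω u x = M → u x = M := by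
    intro x hx hsc
    set f : EuclideanSpace ℝ (Fin n) → ℝ := fun y => u y - ‖x - y‖ ^ 2 / (2 * ε) with hf
    have hfc : ContinuousOn f (closure Ω) := by
      apply hu.sub
      exact (((continuous_const.sub continuous_id).norm.pow 2).div_const _).continuousOn
    obtain ⟨y₀, hy₀K, hy₀max⟩ := hK.exists_isMaxOn hKne hfc
    have h1 : M ≤ f y₀ := by
      rw [← hsc]
      exact csSup_le (hΩne.image f)
        (by rintro _ ⟨y, hy, rfl⟩; exact hy₀max (subset_closure hy))
    have h3 : u y₀ ≤ M := hbd _ hy₀K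
    have h1' : M ≤ u y₀ - ‖x - y₀‖ ^ 2 / (2 * ε) := h1
    have hq0 : ‖x - y₀‖ ^ 2 / (2 * ε) = 0 :=
      le_antisymm (by linarith) (hqnn x y₀)
    have hxy : x = y₀ := by
      field_simp at hq0
      exact sub_eq_zero.1 (norm_eq_zero.1 ((pow_eq_zero_iff two_ne_zero).1 (by rw [hq0, mul_zero])))
    rw [hxy]
    linarith
  constructor
  · apply le_antisymm
    · exact csSup_le (hΩne.image _) (by rintro _ ⟨y, hy, rfl⟩; exact hscle y)
    · have hx₀eq : supConv ε Ω u x₀ = M :=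
        le_antisymm (hscle x₀) (hMeq ▸ hsge x₀ hx₀Ω)
      refine le_csSup ⟨M, ?_⟩ ⟨x₀, hx₀Ω, hx₀eq⟩
      rintro _ ⟨y, hy, rfl⟩
      exact hscle y
  · intro x hx _
    constructor
    · exact hkey x hx
    · intro hux
      exact le_antisymm (hscle x) (hux ▸ hsge x hx)
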